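/- For all integers n ≥ k ≥ 1 there exists a deterministic adaptive strategy σ (depending only on n, not on the family or on k) with the following property: for every nonempty family F of subsets of {1,…,n} in which every member has at most k elements, running σ with each query Y ⊆ {1,…,n} answered by the truth value of "there exists W ∈ F with W ⊆ Y" terminates with output a member of F, after making at most 2·k·(log₂(n/k) + 2) queries. (Theorem 1, query-complexity part / Lemma 1.) -/

import Mathlib

/-- An action of a deterministic adaptive strategy over the universe
`{1,…,n}` (modelled as `Fin n`): either query a subset `Y`, or halt and
output a subset `W`. -/
inductive WEAction (n : ℕ) where
  | query (Y : Finset (Fin n))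
  | halt (W : Finset (Fin n))

/-- The transcript (list of Boolean answers received) after `i` steps of
running the strategy `σ` against the answer function `a`: at each step, if
`σ` queries `Y` the answer `a Y` is appended; once `σ` halts the transcript
no longer changes. -/
def WEtranscript {n : ℕ} (σ : List Bool → WEAction n)
    (a : Finset (Fin n) → Bool) : ℕ → List Bool
  | 0 => []
  | i + 1 =>
    match σ (WEtranscript σ a i) with
    | WEAction.query Y => WEtranscript σ a i ++ [a Y]
    | WEAction.halt _ => WEtranscript σ a i

/-- The list of query sets made by the strategy `σ` against the answer
function `a` within the first `i` steps. -/
def WEqueries {n : ℕ} (σ : List Bool → WEAction n)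
    (a : Finset (Fin n) → Bool) : ℕ → List (Finset (Fin n))
  | 0 => []
  | i + 1 =>
    match σ (WEtranscript σ a i) with
    | WEAction.query Y => WEqueries σ a i ++ [Y]
    | WEAction.halt _ => WEqueries σ a i

namespace WEaux

variable {n : ℕ}

def uL (l : List (Finset (Fin n))) : Finset (Fin n) := l.foldr (· ∪ ·) ∅

@[simp] lemma uL_nil : uL ([] : List (Finset (Fin n))) = ∅ := rfl
@[simp] lemma uL_cons (B : Finset (Fin n)) (l : List (Finset (Fin n))) :
    uL (B :: l) = B ∪ uL l := rfl

lemma uL_append (l₁ l₂ : List (Finset (Fin n))) : uL (l₁ ++ l₂) = uL l₁ ∪ uL l₂ := by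
  induction l₁ with
  | nil => simp
  | cons B l ih => simp [ih, Finset.union_assoc]

lemma mem_uL {x : Fin n} {l : List (Finset (Fin n))} : x ∈ uL l ↔ ∃ S ∈ l, x ∈ S := by
  induction l with
  | nil => simp
  | cons B l ih => simp [ih, Finset.mem_union]

lemma uL_middle (l₁ l₂ : List (Finset (Fin n))) (X : Finset (Fin n)) :
    uL (l₁ ++ X :: l₂) = uL l₁ ∪ X ∪ uL l₂ := by
  rw [uL_append, uL_cons, ← Finset.union_assoc]

noncomputable def fB (s j : ℕ) : ℝ :=
  2 * j * Real.logb 2 ((s : ℝ) / (j : ℝ)) + 4 * j - 2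

lemma logsum {s₁ s₂ j₁ j₂ : ℝ} (hs₁ : 0 < s₁) (hs₂ : 0 < s₂) (hj₁ : 0 < j₁) (hj₂ : 0 < j₂) :
    j₁ * Real.logb 2 (s₁ / j₁) + j₂ * Real.logb 2 (s₂ / j₂) ≤
      (j₁ + j₂) * Real.logb 2 ((s₁ + s₂) / (j₁ + j₂)) := by
  have hj : 0 < j₁ + j₂ := by linarith
  have hp₁ : 0 < s₁ / j₁ := div_pos hs₁ hj₁
  have hp₂ : 0 < s₂ / j₂ := div_pos hs₂ hj₂
  have hw₁ : (0:ℝ) ≤ j₁ / (j₁ + j₂) := by positivity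
  have hw₂ : (0:ℝ) ≤ j₂ / (j₁ + j₂) := by positivity
  have hw : j₁ / (j₁ + j₂) + j₂ / (j₁ + j₂) = 1 := by field_simp
  have ham := Real.geom_mean_le_arith_mean2_weighted hw₁ hw₂ hp₁.le hp₂.le hw
  have hsum : (j₁ / (j₁ + j₂)) * (s₁ / j₁) + (j₂ / (j₁ + j₂)) * (s₂ / j₂)
      = (s₁ + s₂) / (j₁ + j₂) := by field_simp
  rw [hsum] at ham
  have hlhs : 0 < (s₁ / j₁) ^ (j₁ / (j₁ + j₂)) * (s₂ / j₂) ^ (j₂ / (j₁ + j₂)) := by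
    positivity
  have hlog := Real.log_le_log hlhs ham
  rw [Real.log_mul (ne_of_gt (by positivity)) (ne_of_gt (by positivity)),
    Real.log_rpow hp₁, Real.log_rpow hp₂] at hlog
  -- hlog : j₁/(j₁+j₂) * log (s₁/j₁) + j₂/(j₁+j₂) * log (s₂/j₂) ≤ log ((s₁+s₂)/(j₁+j₂))
  have hlog2 : 0 < Real.log 2 := Real.log_pos (by norm_num)
  have key : j₁ * Real.log (s₁ / j₁) + j₂ * Real.log (s₂ / j₂)
      ≤ (j₁ + j₂) * Real.log ((s₁ + s₂) / (j₁ + j₂)) := by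
    have h2 := mul_le_mul_of_nonneg_left hlog hj.le
    have e : (j₁ + j₂) * (j₁ / (j₁ + j₂) * Real.log (s₁ / j₁)
        + j₂ / (j₁ + j₂) * Real.log (s₂ / j₂))
        = j₁ * Real.log (s₁ / j₁) + j₂ * Real.log (s₂ / j₂) := by
      field_simp
    rw [e] at h2
    exact h2
  rw [Real.logb, Real.logb, Real.logb]
  calc j₁ * (Real.log (s₁ / j₁) / Real.log 2) + j₂ * (Real.log (s₂ / j₂) / Real.log 2)
      = (j₁ * Real.log (s₁ / j₁) + j₂ * Real.log (s₂ / j₂)) / Real.log 2 := by ring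
    _ ≤ ((j₁ + j₂) * Real.log ((s₁ + s₂) / (j₁ + j₂))) / Real.log 2 := by gcongr
    _ = (j₁ + j₂) * (Real.log ((s₁ + s₂) / (j₁ + j₂)) / Real.log 2) := by ring

lemma logb_threehalf : (1/2 : ℝ) ≤ Real.logb 2 (3/2) := by
  rw [Real.logb, le_div_iff₀ (Real.log_pos (by norm_num))]
  have h9 : Real.log 2 ≤ Real.log ((3/2 : ℝ) ^ (2:ℕ)) :=
    Real.log_le_log (by norm_num) (by norm_num)
  rw [Real.log_pow] at h9
  push_cast at h9
  linarith

lemma logb_div_eq {x y : ℝ} (hx : 0 < x) (hy : 0 < y) :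
    Real.logb 2 (x / y) = Real.logb 2 x - Real.logb 2 y :=
  Real.logb_div (ne_of_gt hx) (ne_of_gt hy)

lemma fB_combine {s₁ s₂ j₁ j₂ : ℕ} (hs₁ : 1 ≤ s₁) (hs₂ : 1 ≤ s₂)
    (hj₁ : 1 ≤ j₁) (hj₂ : 1 ≤ j₂) :
    fB s₁ j₁ + fB s₂ j₂ + 2 ≤ fB (s₁ + s₂) (j₁ + j₂) := by
  have h := logsum (s₁ := (s₁ : ℝ)) (s₂ := (s₂ : ℝ)) (j₁ := (j₁ : ℝ)) (j₂ := (j₂ : ℝ))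
    (by exact_mod_cast hs₁) (by exact_mod_cast hs₂)
    (by exact_mod_cast hj₁) (by exact_mod_cast hj₂)
  unfold fB
  push_cast
  linarith

lemma fB_chain1 {s s₁ j : ℕ} (hs : 2 ≤ s) (h₁ : 1 ≤ s₁) (hj : 1 ≤ j)
    (h3 : 3 * s₁ ≤ 2 * s) : 1 + fB s₁ j ≤ fB s j := by
  have hsp : (0:ℝ) < s := by exact_mod_cast Nat.lt_of_lt_of_le (by norm_num) hs
  have hs1p : (0:ℝ) < s₁ := by exact_mod_cast h₁
  have hjp : (0:ℝ) < j := by exact_mod_cast hj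
  have hratio : (3/2 : ℝ) ≤ (s : ℝ) / s₁ := by
    rw [le_div_iff₀ hs1p]
    have : (3 : ℝ) * s₁ ≤ 2 * s := by exact_mod_cast h3
    linarith
  have key : (1/2 : ℝ) ≤ Real.logb 2 ((s:ℝ)) - Real.logb 2 ((s₁:ℝ)) := by
    have := logb_threehalf.trans
      (Real.logb_le_logb_of_le (b := 2) (by norm_num) (by norm_num) hratio)
    rwa [logb_div_eq hsp hs1p] at this
  have hj1 : (1:ℝ) ≤ (j:ℝ) := by exact_mod_cast hj
  unfold fB
  rw [logb_div_eq hsp hjp, logb_div_eq hs1p hjp]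
  nlinarith [key, hj1]

lemma fB_chain2 {s s₂ j : ℕ} (hs : 2 ≤ s) (h₁ : 1 ≤ s₂) (hj : 1 ≤ j)
    (h2 : 2 * s₂ ≤ s) : 2 + fB s₂ j ≤ fB s j := by
  have hsp : (0:ℝ) < s := by exact_mod_cast Nat.lt_of_lt_of_le (by norm_num) hs
  have hs2p : (0:ℝ) < s₂ := by exact_mod_cast h₁
  have hjp : (0:ℝ) < j := by exact_mod_cast hj
  have hratio : (2 : ℝ) ≤ (s : ℝ) / s₂ := by
    rw [le_div_iff₀ hs2p]
    have : (2 : ℝ) * s₂ ≤ s := by exact_mod_cast h2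
    linarith
  have key : (1 : ℝ) ≤ Real.logb 2 ((s:ℝ)) - Real.logb 2 ((s₂:ℝ)) := by
    have h1 : (1:ℝ) = Real.logb 2 2 := (Real.logb_self_eq_one (by norm_num)).symm
    have := Real.logb_le_logb_of_le (b := 2) (by norm_num) (by norm_num) hratio
    rw [logb_div_eq hsp hs2p] at this
    linarith [this, h1.le]
  have hj1 : (1:ℝ) ≤ (j:ℝ) := by exact_mod_cast hj
  unfold fB
  rw [logb_div_eq hsp hjp, logb_div_eq hs2p hjp]
  nlinarith [key, hj1]

lemma fB_one_one : fB 1 1 = 2 := by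
  unfold fB
  norm_num

lemma fB_s_one {s : ℕ} (hs : 2 ≤ s) : 4 ≤ fB s 1 := by
  have hsp : (0:ℝ) < s := by exact_mod_cast Nat.lt_of_lt_of_le (by norm_num) hs
  have key : (1 : ℝ) ≤ Real.logb 2 ((s:ℝ)) := by
    have h1 : (1:ℝ) = Real.logb 2 2 := (Real.logb_self_eq_one (by norm_num)).symm
    have := Real.logb_le_logb_of_le (b := 2) (by norm_num) (by norm_num)
      (by exact_mod_cast hs : (2:ℝ) ≤ (s:ℝ))
    linarith
  unfold fB
  norm_num
  nlinarith [key]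

lemma fB_mono {j k N : ℕ} (hj : 1 ≤ j) (hjk : j ≤ k) (hkn : k ≤ N) :
    fB N j ≤ fB N k := by
  have hk : 1 ≤ k := hj.trans hjk
  have hjp : (0:ℝ) < j := by exact_mod_cast hj
  have hkp : (0:ℝ) < k := by exact_mod_cast hk
  have hNp : (0:ℝ) < N := by exact_mod_cast hk.trans hkn
  have hlog2 : 0 < Real.log 2 := Real.log_pos (by norm_num)
  have hl2 : (0.6931471803 : ℝ) < Real.log 2 := Real.log_two_gt_d9
  have hjk' : (j:ℝ) ≤ k := by exact_mod_cast hjk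
  have hd : Real.logb 2 ((k:ℝ)) - Real.logb 2 ((j:ℝ)) = Real.log ((k:ℝ)/j) / Real.log 2 := by
    rw [← logb_div_eq hkp hjp]
    rfl
  have hlogkj : Real.log ((k:ℝ)/j) ≤ (k:ℝ)/j - 1 :=
    Real.log_le_sub_one_of_pos (div_pos hkp hjp)
  have h1 : (j:ℝ) * (Real.logb 2 ((k:ℝ)) - Real.logb 2 ((j:ℝ))) ≤ 2 * ((k:ℝ) - j) := by
    rw [hd, mul_div_assoc', div_le_iff₀ hlog2]
    have hmul := mul_le_mul_of_nonneg_left hlogkj hjp.le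
    have hkj : (j:ℝ) * ((k:ℝ)/j - 1) = (k:ℝ) - j := by field_simp
    nlinarith [hmul, hkj, hjk',
      mul_nonneg (sub_nonneg.mpr hjk') (by linarith : (0:ℝ) ≤ 2*Real.log 2 - 1)]
  have h2 : (0:ℝ) ≤ ((k:ℝ) - j) * (Real.logb 2 ((N:ℝ)) - Real.logb 2 ((k:ℝ))) := by
    apply mul_nonneg (sub_nonneg.mpr hjk')
    apply sub_nonneg.mpr
    exact Real.logb_le_logb_of_le (by norm_num) hkp (by exact_mod_cast hkn)
  unfold fB
  rw [logb_div_eq hNp hjp, logb_div_eq hNp hkp]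
  nlinarith [h1, h2]

def ansP (F : Finset (Finset (Fin n))) (Y : Finset (Fin n)) : Prop := ∃ W ∈ F, W ⊆ Y

lemma ansP_mono {F : Finset (Finset (Fin n))} {Y Z : Finset (Fin n)} (h : Y ⊆ Z) :
    ansP F Y → ansP F Z := fun ⟨W, hW, hs⟩ => ⟨W, hW, hs.trans h⟩

def RInv (F : Finset (Finset (Fin n))) (l : List (Finset (Fin n))) : Prop :=
  ansP F (uL l) ∧ (∀ X ∈ l, ¬ ansP F (uL l \ X)) ∧ l.Pairwise Disjoint

lemma pairwise_middle {l₁ l₂ : List (Finset (Fin n))} {C : Finset (Fin n)}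
    (h : (l₁ ++ C :: l₂).Pairwise Disjoint) :
    (∀ S ∈ l₁, Disjoint S C) ∧ (∀ S ∈ l₂, Disjoint C S) := by
  rw [List.pairwise_append] at h
  obtain ⟨h1, h2, h3⟩ := h
  rw [List.pairwise_cons] at h2
  exact ⟨fun S hS => h3 S hS C List.mem_cons_self, fun S hS => h2.1 S hS⟩

lemma rinv_update {F : Finset (Finset (Fin n))} {l₁ l₂ : List (Finset (Fin n))}
    {C C' : Finset (Fin n)}
    (h : RInv F (l₁ ++ C :: l₂)) (hsub : C' ⊆ C)
    (hans : ansP F (uL (l₁ ++ C' :: l₂))) : RInv F (l₁ ++ C' :: l₂) := by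
  obtain ⟨hU, hX, hD⟩ := h
  have hdj := pairwise_middle hD
  have hsubU : uL (l₁ ++ C' :: l₂) ⊆ uL (l₁ ++ C :: l₂) := by
    rw [uL_middle, uL_middle]
    exact Finset.union_subset_union
      (Finset.union_subset_union (subset_refl _) hsub) (subset_refl _)
  refine ⟨hans, ?_, ?_⟩
  · intro X hX'
    rw [List.mem_append, List.mem_cons] at hX'
    rcases hX' with h₁ | h₂ | h₃
    · exact fun hA => hX X (by simp [h₁])
        (ansP_mono (Finset.sdiff_subset_sdiff hsubU (subset_refl _)) hA)
    · subst h₂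
      intro hA
      apply hX C (by simp)
      refine ansP_mono ?_ hA
      intro x hx
      rw [Finset.mem_sdiff] at hx ⊢
      obtain ⟨hxin, hxC'⟩ := hx
      rw [uL_middle, Finset.mem_union, Finset.mem_union] at hxin
      rw [uL_middle]
      rcases hxin with (h | h) | h
      · refine ⟨by simp [Finset.mem_union, h], ?_⟩
        rcases mem_uL.mp h with ⟨S, hS, hxS⟩
        exact fun hxC => Finset.disjoint_left.mp (hdj.1 S hS) hxS hxC
      · exact absurd h hxC'
      · refine ⟨by simp [Finset.mem_union, h], ?_⟩
        rcases mem_uL.mp h with ⟨S, hS, hxS⟩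
        exact fun hxC => Finset.disjoint_right.mp (hdj.2 S hS) hxS hxC
    · exact fun hA => hX X (by simp [h₃])
        (ansP_mono (Finset.sdiff_subset_sdiff hsubU (subset_refl _)) hA)
  · rw [List.pairwise_append] at hD ⊢
    obtain ⟨h1, h2, h3⟩ := hD
    rw [List.pairwise_cons] at h2 ⊢
    refine ⟨h1, ⟨fun S hS => ((h2.1 S hS).mono_left hsub), h2.2⟩, ?_⟩
    intro a ha b hb
    rcases List.mem_cons.mp hb with rfl | hb'
    · exact (h3 a ha C List.mem_cons_self).mono_right hsub
    · exact h3 a ha b (List.mem_cons.mpr (Or.inr hb'))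

lemma rinv_split {F : Finset (Finset (Fin n))} {l₁ l₂ : List (Finset (Fin n))}
    {C L R : Finset (Fin n)}
    (h : RInv F (l₁ ++ C :: l₂)) (hC : L ∪ R = C) (hLR : Disjoint L R)
    (h1 : ¬ ansP F (uL l₁ ∪ L ∪ uL l₂)) (h2 : ¬ ansP F (uL l₁ ∪ R ∪ uL l₂)) :
    RInv F (l₁ ++ R :: L :: l₂) := by
  obtain ⟨hU, hX, hD⟩ := h
  have hLC : L ⊆ C := hC ▸ Finset.subset_union_left
  have hRC : R ⊆ C := hC ▸ Finset.subset_union_right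
  have hdj := pairwise_middle hD
  have hUU : uL (l₁ ++ R :: L :: l₂) = uL (l₁ ++ C :: l₂) := by
    rw [uL_append, uL_append, uL_cons, uL_cons, uL_cons, ← hC]
    ext x
    simp only [Finset.mem_union]
    tauto
  refine ⟨hUU ▸ hU, ?_, ?_⟩
  · intro X hX'
    rw [hUU]
    rw [List.mem_append, List.mem_cons, List.mem_cons] at hX'
    have hmemU : ∀ x ∈ uL (l₁ ++ C :: l₂), x ∈ uL l₁ ∨ x ∈ C ∨ x ∈ uL l₂ := by
      intro x hx
      rw [uL_middle, Finset.mem_union, Finset.mem_union] at hx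
      tauto
    rcases hX' with hmem | heq | heq | hmem
    · exact fun hA => hX X (by simp [hmem]) hA
    · -- X = R
      rw [heq]
      intro hA
      apply h1
      refine ansP_mono ?_ hA
      intro x hx
      rw [Finset.mem_sdiff] at hx
      obtain ⟨hxin, hxR⟩ := hx
      rcases hmemU x hxin with h | h | h
      · exact Finset.mem_union_left _ (Finset.mem_union_left _ h)
      · have : x ∈ L ∪ R := hC ▸ h
        rcases Finset.mem_union.mp this with h' | h'
        · exact Finset.mem_union_left _ (Finset.mem_union_right _ h')
        · exact absurd h' hxR
      · exact Finset.mem_union_right _ h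
    · -- X = L
      rw [heq]
      intro hA
      apply h2
      refine ansP_mono ?_ hA
      intro x hx
      rw [Finset.mem_sdiff] at hx
      obtain ⟨hxin, hxL⟩ := hx
      rcases hmemU x hxin with h | h | h
      · exact Finset.mem_union_left _ (Finset.mem_union_left _ h)
      · have : x ∈ L ∪ R := hC ▸ h
        rcases Finset.mem_union.mp this with h' | h'
        · exact absurd h' hxL
        · exact Finset.mem_union_left _ (Finset.mem_union_right _ h')
      · exact Finset.mem_union_right _ h
    · exact fun hA => hX X (by simp [hmem]) hA
  · rw [List.pairwise_append] at hD ⊢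
    obtain ⟨h1', h2', h3'⟩ := hD
    rw [List.pairwise_cons] at h2'
    obtain ⟨hCl₂, hpl₂⟩ := h2'
    refine ⟨h1', ?_, ?_⟩
    · rw [List.pairwise_cons, List.pairwise_cons]
      refine ⟨?_, ⟨fun b hb => (hCl₂ b hb).mono_left hLC, hpl₂⟩⟩
      intro b hb
      rcases List.mem_cons.mp hb with rfl | hb'
      · exact hLR.symm
      · exact (hCl₂ b hb').mono_left hRC
    · intro a ha b hb
      rcases List.mem_cons.mp hb with rfl | hb'
      · exact (h3' a ha C List.mem_cons_self).mono_right hRC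
      rcases List.mem_cons.mp hb' with rfl | hb''
      · exact (h3' a ha C List.mem_cons_self).mono_right hLC
      · exact h3' a ha b (List.mem_cons.mpr (Or.inr hb''))

noncomputable def halfL (B : Finset (Fin n)) : Finset (Fin n) :=
  (Finset.exists_subset_card_eq (s := B) (n := (B.card + 1) / 2) (by omega)).choose

lemma halfL_subset (B : Finset (Fin n)) : halfL B ⊆ B :=
  (Finset.exists_subset_card_eq (s := B) (n := (B.card + 1) / 2) (by omega)).choose_spec.1

lemma card_halfL (B : Finset (Fin n)) : (halfL B).card = (B.card + 1) / 2 :=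
  (Finset.exists_subset_card_eq (s := B) (n := (B.card + 1) / 2) (by omega)).choose_spec.2

lemma card_halfR (B : Finset (Fin n)) : (B \ halfL B).card = B.card - (B.card + 1) / 2 := by
  rw [Finset.card_sdiff_of_subset (halfL_subset B), card_halfL]

inductive St (n : ℕ) where
  | start : St n
  | haltE : St n
  | run (fin pend : List (Finset (Fin n))) : St n
  | run2 (fin : List (Finset (Fin n))) (L R : Finset (Fin n))
      (rest : List (Finset (Fin n))) : St n

noncomputable def mk (fin rest : List (Finset (Fin n))) (C : Finset (Fin n)) : St n :=
  if C.card ≤ 1 then St.run (fin ++ [C]) rest else St.run fin (C :: rest)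

noncomputable def act : St n → WEAction n
  | St.start => WEAction.query ∅
  | St.haltE => WEAction.halt ∅
  | St.run fin [] => WEAction.halt (uL fin)
  | St.run fin (B :: rest) => WEAction.query (uL fin ∪ halfL B ∪ uL rest)
  | St.run2 fin _ R rest => WEAction.query (uL fin ∪ R ∪ uL rest)

noncomputable def nxt : St n → Bool → St n
  | St.start, b => if b then St.haltE else mk [] [] Finset.univ
  | St.haltE, _ => St.haltE
  | St.run fin [], _ => St.run fin []
  | St.run fin (B :: rest), b =>
      if b then mk fin rest (halfL B)
      else St.run2 fin (halfL B) (B \ halfL B) rest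
  | St.run2 fin L R rest, b =>
      if b then mk fin rest R
      else if R.card ≤ 1 then mk (fin ++ [R]) rest L else St.run fin (R :: L :: rest)

noncomputable def stepA (a : Finset (Fin n) → Bool) (s : St n) : St n :=
  match act s with
  | WEAction.query Y => nxt s (a Y)
  | WEAction.halt _ => s

noncomputable def evolve (a : Finset (Fin n) → Bool) : St n → ℕ → St n
  | s, 0 => s
  | s, i + 1 => evolve a (stepA a s) i

lemma evolve_add (a : Finset (Fin n) → Bool) (i j : ℕ) :
    ∀ s : St n, evolve a s (i + j) = evolve a (evolve a s i) j := by
  induction i with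
  | zero => intro s; rw [Nat.zero_add]; rfl
  | succ i ih =>
    intro s
    have : i + 1 + j = (i + j) + 1 := by omega
    rw [this]
    show evolve a (stepA a s) (i + j) = _
    rw [ih (stepA a s)]
    rfl

lemma sim (a : Finset (Fin n) → Bool) :
    ∀ i, List.foldl nxt St.start
        (WEtranscript (fun bs => act (bs.foldl nxt St.start)) a i)
      = evolve a St.start i := by
  intro i
  induction i with
  | zero => rfl
  | succ i ih =>
    set σ : List Bool → WEAction n := fun bs => act (bs.foldl nxt St.start) with hσ
    have hs : σ (WEtranscript σ a i) = act (evolve a St.start i) := by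
      rw [hσ]
      show act (List.foldl nxt St.start (WEtranscript σ a i)) = _
      rw [ih]
    have hev : evolve a St.start (i + 1) = stepA a (evolve a St.start i) := by
      rw [evolve_add a i 1]
      rfl
    cases hA : act (evolve a St.start i) with
    | query Y =>
      have ht : WEtranscript σ a (i + 1) = WEtranscript σ a i ++ [a Y] := by
        rw [WEtranscript, hs, hA]
      rw [ht, List.foldl_append, ih]
      rw [hev, stepA, hA]
      rfl
    | halt W =>
      have ht : WEtranscript σ a (i + 1) = WEtranscript σ a i := by
        rw [WEtranscript, hs, hA]
      rw [ht, ih, hev, stepA, hA]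

lemma q_len (σ : List Bool → WEAction n) (a : Finset (Fin n) → Bool) :
    ∀ i, (WEqueries σ a i).length ≤ i := by
  intro i
  induction i with
  | zero => simp [WEqueries]
  | succ i ih =>
    rw [WEqueries]
    cases σ (WEtranscript σ a i) with
    | query Y => simp only [List.length_append, List.length_singleton]; omega
    | halt W =>
      show (WEqueries σ a i).length ≤ i + 1
      omega

def Inv (F : Finset (Finset (Fin n))) (fin pend : List (Finset (Fin n))) : Prop :=
  (∀ S ∈ fin, S.card = 1) ∧ (∀ B ∈ pend, 2 ≤ B.card) ∧ RInv F (fin ++ pend)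

def InvM (F : Finset (Finset (Fin n))) (fin rest : List (Finset (Fin n)))
    (C : Finset (Fin n)) : Prop :=
  if C.card ≤ 1 then Inv F (fin ++ [C]) rest else Inv F fin (C :: rest)

lemma invM_of {F : Finset (Finset (Fin n))} {fin rest : List (Finset (Fin n))}
    {C : Finset (Fin n)}
    (hR : RInv F (fin ++ C :: rest)) (hfin : ∀ S ∈ fin, S.card = 1)
    (hrest : ∀ B ∈ rest, 2 ≤ B.card) (hC : 1 ≤ C.card) : InvM F fin rest C := by
  unfold InvM
  split_ifs with h
  · refine ⟨?_, hrest, ?_⟩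
    · intro S hS
      rcases List.mem_append.mp hS with h' | h'
      · exact hfin S h'
      · rw [List.mem_singleton] at h'
        subst h'
        omega
    · rw [List.append_assoc]
      exact hR
  · refine ⟨hfin, ?_, hR⟩
    intro B hB
    rcases List.mem_cons.mp hB with rfl | h'
    · omega
    · exact hrest B h'

lemma card_uL {l : List (Finset (Fin n))} (hD : l.Pairwise Disjoint)
    (h1 : ∀ S ∈ l, S.card = 1) : (uL l).card = l.length := by
  induction l with
  | nil => simp
  | cons S l ih =>
    rw [uL_cons]
    rw [List.pairwise_cons] at hD
    have hdisj : Disjoint S (uL l) := by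
      rw [Finset.disjoint_left]
      intro x hxS hxU
      rcases mem_uL.mp hxU with ⟨T, hT, hxT⟩
      exact Finset.disjoint_left.mp (hD.1 T hT) hxS hxT
    rw [Finset.card_union_of_disjoint hdisj,
      ih hD.2 (fun T hT => h1 T (by simp [hT])), h1 S (by simp)]
    simp [Nat.add_comm]

lemma final_state {F : Finset (Finset (Fin n))} {sings : List (Finset (Fin n))}
    (hInv : Inv F sings []) :
    uL sings ∈ F ∧ (uL sings).card = sings.length := by
  obtain ⟨hfin, _, hR⟩ := hInv
  rw [List.append_nil] at hR
  obtain ⟨hU, hX, hD⟩ := hR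
  obtain ⟨W, hWF, hWU⟩ := hU
  have hUW : uL sings ⊆ W := by
    intro x hx
    by_contra hxW
    rcases mem_uL.mp hx with ⟨S, hS, hxS⟩
    have hS1 : S = {x} := by
      have hc := hfin S hS
      rw [Finset.card_eq_one] at hc
      obtain ⟨y, hy⟩ := hc
      subst hy
      rw [Finset.mem_singleton] at hxS
      rw [hxS]
    apply hX S hS
    refine ⟨W, hWF, ?_⟩
    intro w hw
    rw [Finset.mem_sdiff]
    refine ⟨hWU hw, ?_⟩
    rw [hS1, Finset.mem_singleton]
    rintro rfl
    exact hxW hw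
  have heq : uL sings = W := Finset.Subset.antisymm hUW hWU
  exact ⟨heq ▸ hWF, card_uL hD hfin⟩

lemma evolve_one (a : Finset (Fin n) → Bool) (s : St n) (m : ℕ) :
    evolve a s (1 + m) = evolve a (stepA a s) m := by
  rw [evolve_add a 1 m]
  rfl

lemma resolve (F : Finset (Finset (Fin n))) (a : Finset (Fin n) → Bool)
    (ha : ∀ Y, a Y = true ↔ ansP F Y) :
    ∀ s : ℕ, ∀ C fin rest, C.card = s → 1 ≤ s → InvM F fin rest C →
    ∃ (m : ℕ) (sings : List (Finset (Fin n))),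
      evolve a (mk fin rest C) m = St.run (fin ++ sings) rest ∧
      Inv F (fin ++ sings) rest ∧ 1 ≤ sings.length ∧
      (m : ℝ) ≤ fB s sings.length - 2 := by
  intro s
  induction s using Nat.strong_induction_on with
  | _ s IH =>
  intro C fin rest hcs hs1 hInv
  by_cases hc1 : C.card ≤ 1
  · have hs : s = 1 := by omega
    subst hs
    refine ⟨0, [C], ?_, ?_, by simp, ?_⟩
    · rw [mk, if_pos hc1]
      rfl
    · rw [InvM, if_pos hc1] at hInv
      exact hInv
    · simp only [List.length_singleton, fB_one_one]
      norm_num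
  · have hs2 : 2 ≤ s := by omega
    rw [mk, if_neg hc1]
    rw [InvM, if_neg hc1] at hInv
    obtain ⟨hfin, hpend, hR⟩ := hInv
    have hrest : ∀ B ∈ rest, 2 ≤ B.card :=
      fun B hB => hpend B (List.mem_cons.mpr (Or.inr hB))
    set L := halfL C with hLdef
    set R := C \ halfL C with hRdef
    have hsL : L.card = (s + 1) / 2 := by rw [hLdef, card_halfL, hcs]
    have hsR : R.card = s - (s + 1) / 2 := by rw [hRdef, card_halfR, hcs]
    have hLpos : 1 ≤ L.card := by omega
    have hRpos : 1 ≤ R.card := by omega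
    have hLlt : L.card < s := by omega
    have hRlt : R.card < s := by omega
    have hLsub : L ⊆ C := halfL_subset C
    have hRsub : R ⊆ C := Finset.sdiff_subset
    have hLR : L ∪ R = C := Finset.union_sdiff_of_subset hLsub
    have hLRd : Disjoint L R := Finset.disjoint_sdiff
    cases hY1 : a (uL fin ∪ L ∪ uL rest) with
    | true =>
      have hans1 : ansP F (uL (fin ++ L :: rest)) := by
        rw [uL_middle]
        exact (ha _).mp hY1
      have hInvML : InvM F fin rest L :=
        invM_of (rinv_update hR hLsub hans1) hfin hrest hLpos
      obtain ⟨m₁, sings, heq, hInv', hlen, hbound⟩ :=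
        IH L.card hLlt L fin rest rfl hLpos hInvML
      refine ⟨1 + m₁, sings, ?_, hInv', hlen, ?_⟩
      · rw [evolve_one]
        have hstep : stepA a (St.run fin (C :: rest)) = mk fin rest L := by
          show nxt (St.run fin (C :: rest)) (a (uL fin ∪ L ∪ uL rest)) = _
          rw [hY1]
          rfl
        rw [hstep]
        exact heq
      · have hchain := fB_chain1 (s := s) (s₁ := L.card) (j := sings.length)
          hs2 hLpos hlen (by omega)
        push_cast
        linarith
    | false =>
      have hnot1 : ¬ ansP F (uL fin ∪ L ∪ uL rest) := by
        intro h
        rw [(ha _).mpr h] at hY1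
        exact Bool.false_ne_true hY1.symm
      have hstep1 : stepA a (St.run fin (C :: rest)) = St.run2 fin L R rest := by
        show nxt (St.run fin (C :: rest)) (a (uL fin ∪ L ∪ uL rest)) = _
        rw [hY1]
        rfl
      cases hY2 : a (uL fin ∪ R ∪ uL rest) with
      | true =>
        have hans2 : ansP F (uL (fin ++ R :: rest)) := by
          rw [uL_middle]
          exact (ha _).mp hY2
        have hInvMR : InvM F fin rest R :=
          invM_of (rinv_update hR hRsub hans2) hfin hrest hRpos
        obtain ⟨m₁, sings, heq, hInv', hlen, hbound⟩ :=
          IH R.card hRlt R fin rest rfl hRpos hInvMR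
        refine ⟨1 + (1 + m₁), sings, ?_, hInv', hlen, ?_⟩
        · rw [evolve_one, hstep1, evolve_one]
          have hstep2 : stepA a (St.run2 fin L R rest) = mk fin rest R := by
            show nxt (St.run2 fin L R rest) (a (uL fin ∪ R ∪ uL rest)) = _
            rw [hY2]
            rfl
          rw [hstep2]
          exact heq
        · have hchain := fB_chain2 (s := s) (s₂ := R.card) (j := sings.length)
            hs2 hRpos hlen (by omega)
          push_cast
          linarith
      | false =>
        have hnot2 : ¬ ansP F (uL fin ∪ R ∪ uL rest) := by
          intro h
          rw [(ha _).mpr h] at hY2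
          exact Bool.false_ne_true hY2.symm
        have hRsplit : RInv F (fin ++ R :: L :: rest) :=
          rinv_split hR hLR hLRd hnot1 hnot2
        by_cases hRc : R.card ≤ 1
        · -- R is a singleton
          have hstep2 : stepA a (St.run2 fin L R rest) = mk (fin ++ [R]) rest L := by
            show nxt (St.run2 fin L R rest) (a (uL fin ∪ R ∪ uL rest)) = _
            rw [hY2]
            show (if R.card ≤ 1 then mk (fin ++ [R]) rest L
              else St.run fin (R :: L :: rest)) = _
            rw [if_pos hRc]
          have hfin' : ∀ S ∈ fin ++ [R], S.card = 1 := by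
            intro S hS
            rcases List.mem_append.mp hS with h' | h'
            · exact hfin S h'
            · rw [List.mem_singleton] at h'
              subst h'
              omega
          have hInvM : InvM F (fin ++ [R]) rest L := by
            apply invM_of ?_ hfin' hrest hLpos
            rw [List.append_assoc]
            exact hRsplit
          obtain ⟨m₁, sings, heq, hInv', hlen, hbound⟩ :=
            IH L.card hLlt L (fin ++ [R]) rest rfl hLpos hInvM
          refine ⟨1 + (1 + m₁), R :: sings, ?_, ?_, by simp, ?_⟩
          · rw [evolve_one, hstep1, evolve_one, hstep2, heq, List.append_assoc]
            rfl
          · rw [List.append_assoc] at hInv'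
            exact hInv'
          · have hcomb := fB_combine (s₁ := L.card) (s₂ := 1)
              (j₁ := sings.length) (j₂ := 1) hLpos le_rfl hlen le_rfl
            rw [fB_one_one] at hcomb
            have hls : L.card + 1 = s := by omega
            rw [hls] at hcomb
            have hlenc : (R :: sings).length = sings.length + 1 := by simp
            rw [hlenc]
            push_cast
            linarith
        · -- both halves stay
          have hLc2 : 2 ≤ L.card := by omega
          have hstep2 : stepA a (St.run2 fin L R rest) = mk fin (L :: rest) R := by
            show nxt (St.run2 fin L R rest) (a (uL fin ∪ R ∪ uL rest)) = _
            rw [hY2]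
            show (if R.card ≤ 1 then mk (fin ++ [R]) rest L
              else St.run fin (R :: L :: rest)) = _
            rw [if_neg hRc, mk, if_neg hRc]
          have hInvM : InvM F fin (L :: rest) R := by
            rw [InvM, if_neg hRc]
            refine ⟨hfin, ?_, hRsplit⟩
            intro B hB
            rcases List.mem_cons.mp hB with rfl | h'
            · omega
            rcases List.mem_cons.mp h' with rfl | h''
            · exact hLc2
            · exact hrest B h''
          obtain ⟨m₂, singsR, heq₂, hInv₂, hlen₂, hb₂⟩ :=
            IH R.card hRlt R fin (L :: rest) rfl hRpos hInvM
          have hInvML : InvM F (fin ++ singsR) rest L := by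
            rw [InvM, if_neg (by omega : ¬ L.card ≤ 1)]
            exact hInv₂
          obtain ⟨m₁, singsL, heq₁, hInv₁, hlen₁, hb₁⟩ :=
            IH L.card hLlt L (fin ++ singsR) rest rfl hLpos hInvML
          refine ⟨1 + (1 + (m₂ + m₁)), singsR ++ singsL, ?_, ?_, ?_, ?_⟩
          · rw [evolve_one, hstep1, evolve_one, hstep2, evolve_add a m₂ m₁, heq₂]
            have : St.run (fin ++ singsR) (L :: rest) = mk (fin ++ singsR) rest L := by
              rw [mk, if_neg (by omega : ¬ L.card ≤ 1)]
            rw [this, heq₁, List.append_assoc]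
          · rw [List.append_assoc] at hInv₁
            exact hInv₁
          · simp only [List.length_append]
            omega
          · have hcomb := fB_combine (s₁ := R.card) (s₂ := L.card)
              (j₁ := singsR.length) (j₂ := singsL.length) hRpos hLpos hlen₂ hlen₁
            have hls : R.card + L.card = s := by omega
            rw [hls] at hcomb
            simp only [List.length_append]
            push_cast
            linarith

end WEaux

/-- Theorem 1 (query-complexity part) / Lemma 1: for all `n ≥ k ≥ 1` there is
a deterministic adaptive strategy `σ` depending only on `n` (not on `k` or on
the family) such that for every nonempty family `F` of subsets of `{1,…,n}`,
each of size at most `k`, running `σ` with each query `Y` answered by whether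
some `W ∈ F` satisfies `W ⊆ Y` halts with output a member of `F` after at
most `2·k·(log₂(n/k) + 2)` queries. -/
theorem deterministic_witness_extraction (n : ℕ) (hn : 1 ≤ n) :
    ∃ σ : List Bool → WEAction n,
      ∀ k : ℕ, 1 ≤ k → k ≤ n →
        ∀ F : Finset (Finset (Fin n)), F.Nonempty → (∀ W ∈ F, W.card ≤ k) →
          ∃ (m : ℕ) (W : Finset (Fin n)),
            σ (WEtranscript σ (fun Y => decide (∃ W' ∈ F, W' ⊆ Y)) m) =
                WEAction.halt W ∧
            W ∈ F ∧
            ((WEqueries σ (fun Y => decide (∃ W' ∈ F, W' ⊆ Y)) m).length : ℝ) ≤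
              2 * k * (Real.logb 2 ((n : ℝ) / k) + 2) := by
  classical
  refine ⟨fun bs => WEaux.act (bs.foldl WEaux.nxt WEaux.St.start), ?_⟩
  intro k hk hkn F hFne hcard
  set a : Finset (Fin n) → Bool := fun Y => decide (∃ W' ∈ F, W' ⊆ Y) with hadef
  set σ : List Bool → WEAction n :=
    fun bs => WEaux.act (bs.foldl WEaux.nxt WEaux.St.start) with hσdef
  have ha : ∀ Y, a Y = true ↔ WEaux.ansP F Y := by
    intro Y
    rw [hadef]
    simp [WEaux.ansP]
  have hsim : ∀ i, σ (WEtranscript σ a i)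
      = WEaux.act (WEaux.evolve a WEaux.St.start i) := by
    intro i
    have hs := WEaux.sim (n := n) a i
    rw [← hσdef] at hs
    rw [hσdef]
    show WEaux.act (List.foldl WEaux.nxt WEaux.St.start (WEtranscript σ a i)) = _
    rw [hs]
  have hk1 : (1:ℝ) ≤ (k:ℝ) := by exact_mod_cast hk
  have hkn' : (k:ℝ) ≤ (n:ℝ) := by exact_mod_cast hkn
  have hkpos : (0:ℝ) < (k:ℝ) := by linarith
  have hlogb : 0 ≤ Real.logb 2 ((n:ℝ)/(k:ℝ)) := by
    apply Real.logb_nonneg (by norm_num)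
    rw [le_div_iff₀ hkpos]
    linarith
  by_cases hemp : WEaux.ansP F ∅
  · -- the empty set is a witness
    refine ⟨1, ∅, ?_, ?_, ?_⟩
    · rw [hsim 1]
      have e1 : WEaux.evolve a WEaux.St.start 1 = WEaux.St.haltE := by
        show WEaux.nxt WEaux.St.start (a ∅) = _
        rw [(ha ∅).mpr hemp]
        rfl
      rw [e1]
      rfl
    · obtain ⟨W, hWF, hW⟩ := hemp
      rwa [Finset.subset_empty.mp hW] at hWF
    · have hq := WEaux.q_len σ a 1
      have hq' : ((WEqueries σ a 1).length : ℝ) ≤ 1 := by exact_mod_cast hq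
      nlinarith [hlogb, hk1, hq']
  · -- main run
    have ha0 : a ∅ = false := by
      cases haa : a ∅ with
      | false => rfl
      | true => exact absurd ((ha ∅).mp haa) hemp
    have e1 : WEaux.evolve a WEaux.St.start 1 = WEaux.mk [] [] Finset.univ := by
      show WEaux.nxt WEaux.St.start (a ∅) = _
      rw [ha0]
      rfl
    have hcardU : (Finset.univ : Finset (Fin n)).card = n := by simp
    have hInvM : WEaux.InvM F [] [] Finset.univ := by
      apply WEaux.invM_of ?_ (by simp) (by simp) (by rw [hcardU]; exact hn)
      refine ⟨?_, ?_, ?_⟩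
      · obtain ⟨W, hWF⟩ := hFne
        refine ⟨W, hWF, ?_⟩
        intro x hx
        simp [WEaux.uL]
      · intro X hX
        simp only [List.nil_append, List.mem_singleton] at hX
        subst hX
        have hdU : WEaux.uL (n := n) [Finset.univ] \ Finset.univ = ∅ := by
          simp [WEaux.uL]
        show ¬ WEaux.ansP F (WEaux.uL ([] ++ [Finset.univ]) \ Finset.univ)
        rw [List.nil_append, hdU]
        exact hemp
      · simp
    obtain ⟨m₁, sings, heq, hInvF, hlen, hbound⟩ :=
      WEaux.resolve F a ha n Finset.univ [] [] hcardU hn hInvM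
    rw [List.nil_append] at heq hInvF
    obtain ⟨hUF, hUcard⟩ := WEaux.final_state hInvF
    have hjk : sings.length ≤ k := by
      have := hcard _ hUF
      omega
    refine ⟨1 + m₁, WEaux.uL sings, ?_, hUF, ?_⟩
    · rw [hsim (1 + m₁)]
      have e2 : WEaux.evolve a WEaux.St.start (1 + m₁) = WEaux.St.run sings [] := by
        rw [WEaux.evolve_add a 1 m₁, e1]
        exact heq
      rw [e2]
      rfl
    · have hq := WEaux.q_len σ a (1 + m₁)
      have hq' : ((WEqueries σ a (1 + m₁)).length : ℝ) ≤ 1 + (m₁ : ℝ) := by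
        exact_mod_cast hq
      have hmono := WEaux.fB_mono (j := sings.length) (k := k) (N := n) hlen hjk hkn
      have hfbk : WEaux.fB n k
          = 2*(k:ℝ)*Real.logb 2 ((n:ℝ)/(k:ℝ)) + 4*(k:ℝ) - 2 := rfl
      nlinarith [hbound, hmono, hq', hfbk.le, hfbk.ge, hk1]
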